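/- In the generative model where each example x_i ∈ ℝ^{3+5n} has x_{i,1} = y_i, x_{i,2} = x_{i,3} = 1, and x_{i,j} = 1 for j = 4+5(i−1), …, 4+5(i−1)+2(1−y_i) (zero otherwise), with labels y_i ∈ {−1, 1}, the vector u = Xᵀy satisfies ⟨sign(u), x_i⟩ = 4y_i for every example i. In particular X·sign(Xᵀy) = 4y, so the hypothesis of the adaptive-methods lemma holds with c = 4. -/

import Mathlib

/-- The data matrix of the generative model: example `i` (0-indexed) has its label in
coordinate 0, ones in coordinates 1 and 2, and ones in its block of unique features
`3 + 5 i, …, 3 + 5 i + 2 (1 − y_i)` (i.e. 1 unique feature if `y_i = 1`, 5 if `y_i = −1`);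
all other coordinates are 0. -/
noncomputable def dataX (n : ℕ) (y : Fin n → ℝ) : Matrix (Fin n) (Fin (3 + 5 * n)) ℝ :=
  fun i j =>
    if (j : ℕ) = 0 then y i
    else if (j : ℕ) = 1 ∨ (j : ℕ) = 2 then 1
    else if 3 + 5 * (i : ℕ) ≤ (j : ℕ) ∧
        (j : ℕ) ≤ 3 + 5 * (i : ℕ) + (if y i = 1 then 0 else 4) then 1
    else 0

open Finset Matrix in
/-- In the generative model with `∑ i, y i > 0`, the vector `u = Xᵀ y` satisfies
`⟨sign u, x_i⟩ = 4 y_i` for every training example `i`; i.e.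
`X · sign(Xᵀ y) = 4 • y`, so the hypothesis of the adaptive-methods lemma holds
with `c = 4`. -/
theorem sign_inner_product_training {n : ℕ} (y : Fin n → ℝ)
    (hy : ∀ i, y i = 1 ∨ y i = -1) (hb : 0 < ∑ i, y i) :
    (∀ i, (fun j => Real.sign ((dataX n y).transpose.mulVec y j)) ⬝ᵥ (dataX n y) i =
        4 * y i) ∧
      (dataX n y).mulVec (fun j => Real.sign ((dataX n y).transpose.mulVec y j)) =
        (4 : ℝ) • y := by
  have hn : 0 < n := by
    rcases Nat.eq_zero_or_pos n with h | h
    · exfalso; subst h; simp at hb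
    · exact h
  have hsq : ∀ i, y i * y i = 1 := by
    intro i; rcases hy i with h | h <;> rw [h] <;> norm_num
  set u : Fin (3 + 5 * n) → ℝ := (dataX n y).transpose.mulVec y with hu
  have hu' : ∀ j, u j = ∑ i, dataX n y i j * y i := by
    intro j
    simp [hu, Matrix.mulVec, dotProduct, Matrix.transpose_apply]
  have hs0 : ∀ j : Fin (3 + 5 * n), (j : ℕ) = 0 → Real.sign (u j) = 1 := by
    intro j hj
    have huj : u j = n := by
      rw [hu']
      have h1 : ∀ i : Fin n, dataX n y i j * y i = 1 := by
        intro i; simp [dataX, hj, hsq i]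
      rw [Finset.sum_congr rfl (fun i _ => h1 i)]
      simp
    rw [huj]
    exact Real.sign_of_pos (by exact_mod_cast hn)
  have hs12 : ∀ j : Fin (3 + 5 * n), (j : ℕ) = 1 ∨ (j : ℕ) = 2 → Real.sign (u j) = 1 := by
    intro j hj
    have h0 : (j : ℕ) ≠ 0 := by rcases hj with h | h <;> omega
    have huj : u j = ∑ i, y i := by
      rw [hu']
      refine Finset.sum_congr rfl fun i _ => ?_
      simp [dataX, h0, hj]
    rw [huj]; exact Real.sign_of_pos hb
  have hkey : ∀ (i : Fin n) (j : Fin (3 + 5 * n)), 3 ≤ (j : ℕ) →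
      dataX n y i j ≠ 0 → Real.sign (u j) = y i := by
    intro i j hj hX
    have h0 : (j : ℕ) ≠ 0 := by omega
    have h12 : ¬((j : ℕ) = 1 ∨ (j : ℕ) = 2) := by omega
    have hcond : 3 + 5 * (i : ℕ) ≤ (j : ℕ) ∧
        (j : ℕ) ≤ 3 + 5 * (i : ℕ) + (if y i = 1 then 0 else 4) := by
      by_contra h
      exact hX (by simp [dataX, h0, h12, h])
    have huj : u j = y i := by
      rw [hu', Finset.sum_eq_single i]
      · simp [dataX, h0, h12, hcond]
      · intro i' _ hne
        have hne' : (i' : ℕ) ≠ (i : ℕ) := fun h => hne (Fin.ext h)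
        have hb4 : (if y i = 1 then (0:ℕ) else 4) ≤ 4 := by split <;> omega
        have hb4' : (if y i' = 1 then (0:ℕ) else 4) ≤ 4 := by split <;> omega
        have hnc : ¬(3 + 5 * (i' : ℕ) ≤ (j : ℕ) ∧
            (j : ℕ) ≤ 3 + 5 * (i' : ℕ) + (if y i' = 1 then 0 else 4)) := by
          rintro ⟨ha, hbd⟩
          omega
        simp [dataX, h0, h12, hnc]
      · intro h; exact absurd (Finset.mem_univ i) h
    rw [huj]
    rcases hy i with h | h <;> rw [h]
    · exact Real.sign_of_pos one_pos
    · simpa using Real.sign_of_neg (by norm_num : (-1:ℝ) < 0)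
  have hmain : ∀ i, (fun j => Real.sign (u j)) ⬝ᵥ (dataX n y) i = 4 * y i := by
    intro i
    set c : ℕ := if y i = 1 then 0 else 4 with hc
    have hc4 : c ≤ 4 := by rw [hc]; split <;> omega
    set a : ℕ := 3 + 5 * (i : ℕ) with ha
    have hilt := i.isLt
    have ha3 : 3 ≤ a := by omega
    have hXeq : ∀ j : Fin (3 + 5 * n), ¬(j:ℕ) = 0 → ¬((j:ℕ) = 1 ∨ (j:ℕ) = 2) →
        dataX n y i j = if a ≤ (j:ℕ) ∧ (j:ℕ) ≤ a + c then 1 else 0 := by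
      intro j h0 h12
      simp only [dataX, if_neg h0, if_neg h12, ha, hc]
    have hpt : ∀ j : Fin (3 + 5 * n), Real.sign (u j) * dataX n y i j =
        (if (j:ℕ) ∈ ({0} : Finset ℕ) then y i else 0)
          + (if (j:ℕ) ∈ ({1, 2} : Finset ℕ) then 1 else 0)
          + (if (j:ℕ) ∈ Finset.Icc a (a + c) then y i else 0) := by
      intro j
      by_cases h0 : (j:ℕ) = 0
      · rw [hs0 j h0, if_pos (by simp [h0]), if_neg (by simp [h0]),
          if_neg (by simp only [Finset.mem_Icc]; omega)]
        have : dataX n y i j = y i := by simp [dataX, h0]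
        rw [this]; ring
      by_cases h12 : (j:ℕ) = 1 ∨ (j:ℕ) = 2
      · rw [hs12 j h12, if_neg (by simp [h0]),
          if_pos (by simpa using h12),
          if_neg (by simp only [Finset.mem_Icc]; omega)]
        have : dataX n y i j = 1 := by simp only [dataX, if_neg h0, if_pos h12]
        rw [this]; ring
      · have hj3 : 3 ≤ (j:ℕ) := by omega
        rw [if_neg (by simp [h0]), if_neg (by simpa using h12)]
        by_cases hmem : a ≤ (j:ℕ) ∧ (j:ℕ) ≤ a + c
        · have hne : dataX n y i j ≠ 0 := by
            rw [hXeq j h0 h12, if_pos hmem]; norm_num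
          rw [hkey i j hj3 hne, hXeq j h0 h12, if_pos hmem,
            if_pos (Finset.mem_Icc.mpr hmem)]
          ring
        · rw [hXeq j h0 h12, if_neg hmem,
            if_neg (fun hm => hmem (Finset.mem_Icc.mp hm))]
          ring
    have hsum : (fun j => Real.sign (u j)) ⬝ᵥ (dataX n y) i =
        ∑ k ∈ Finset.range (3 + 5 * n),
          ((if k ∈ ({0} : Finset ℕ) then y i else 0)
            + (if k ∈ ({1, 2} : Finset ℕ) then 1 else 0)
            + (if k ∈ Finset.Icc a (a + c) then y i else 0)) := by
      rw [dotProduct, ← Fin.sum_univ_eq_sum_range]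
      exact Finset.sum_congr rfl fun j _ => hpt j
    rw [hsum, Finset.sum_add_distrib, Finset.sum_add_distrib]
    rw [Finset.sum_ite_mem, Finset.sum_ite_mem, Finset.sum_ite_mem]
    have e1 : Finset.range (3 + 5 * n) ∩ ({0} : Finset ℕ) = {0} := by
      apply Finset.inter_eq_right.mpr
      intro k hk; simp only [Finset.mem_singleton] at hk
      simp only [Finset.mem_range]; omega
    have e2 : Finset.range (3 + 5 * n) ∩ ({1, 2} : Finset ℕ) = {1, 2} := by
      apply Finset.inter_eq_right.mpr
      intro k hk; simp only [Finset.mem_insert, Finset.mem_singleton] at hk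
      simp only [Finset.mem_range]; omega
    have e3 : Finset.range (3 + 5 * n) ∩ Finset.Icc a (a + c) = Finset.Icc a (a + c) := by
      apply Finset.inter_eq_right.mpr
      intro k hk; rw [Finset.mem_Icc] at hk
      simp only [Finset.mem_range]; omega
    rw [e1, e2, e3]
    rw [Finset.sum_const, Finset.sum_const, Finset.sum_const, Nat.card_Icc]
    have hcard2 : ({1, 2} : Finset ℕ).card = 2 := by decide
    rw [hcard2, Finset.card_singleton]
    have hac : a + c + 1 - a = c + 1 := by omega
    rw [hac]
    simp only [nsmul_eq_mul, Nat.cast_ofNat, Nat.cast_one, Nat.cast_add]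
    rcases hy i with h | h
    · have hc0 : c = 0 := by rw [hc, if_pos h]
      rw [hc0, h]; norm_num
    · have hc4' : c = 4 := by rw [hc, if_neg (by rw [h]; norm_num)]
      rw [hc4', h]; norm_num
  refine ⟨hmain, ?_⟩
  funext i
  rw [Matrix.mulVec, dotProduct_comm]
  rw [hmain i]
  simp [smul_eq_mul]
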